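/- Let B^x be standard d-dimensional Brownian motion started at x and α, β, ε > 0, n ∈ ℕ. Then E[ e^{-ε Σ_{k=0}^{m-1} (α |B^x_{2kε}|² - β)} ] = e^{-α_m |x|² + β_m} for all m = 1,…,n, where the sequences are given by the recursions α_{m+1} = αε + α_m/(1 + 4ε α_m), α_1 = αε, and β_{m+1} = β_m + βε - (d/2) log(1 + 4ε α_m) (with β interpreted per coordinate), β_1 = βε. -/

import Mathlib

open MeasureTheory ProbabilityTheory Finset
open scoped NNReal ENNReal

noncomputable section

variable {d : ℕ} {Ω : Type*}

/-- A one-dimensional (pre-)Brownian motion started at `0`. -/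
def IsPreBM [MeasurableSpace Ω] (μ : Measure Ω) (B : ℝ → Ω → ℝ) : Prop :=
  (∀ᵐ ω ∂μ, B 0 ω = 0) ∧
  (∀ᵐ ω ∂μ, Continuous fun t => B t ω) ∧
  (∀ s t : ℝ, 0 ≤ s → s ≤ t →
    Measure.map (fun ω => B t ω - B s ω) μ = gaussianReal 0 (Real.toNNReal (t - s))) ∧
  (∀ (n : ℕ) (ts : ℕ → ℝ), Monotone ts → (∀ i, 0 ≤ ts i) →
    iIndepFun (β := fun _ : Fin n => ℝ)
      (fun i : Fin n => fun ω => B (ts (i + 1)) ω - B (ts i) ω) μ)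

/-- A `d`-dimensional standard Brownian motion started at `0`. -/
def IsBM [MeasurableSpace Ω] (μ : Measure Ω)
    (B : ℝ → Ω → EuclideanSpace ℝ (Fin d)) : Prop :=
  (∀ i : Fin d, IsPreBM μ (fun t ω => B t ω i)) ∧
  iIndepFun (β := fun _ : Fin d => ℝ → ℝ)
    (fun (i : Fin d) (ω : Ω) => fun t : ℝ => B t ω i) μ

/-- The sequence `α_m`: `α₁ = αε`, `α_{m+1} = αε + α_m/(1 + 4εα_m)` (with `α₀ = 0`). -/
def alphaSeq (α ε : ℝ) : ℕ → ℝ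
  | 0 => 0
  | m + 1 => α * ε + alphaSeq α ε m / (1 + 4 * ε * alphaSeq α ε m)

/-- The sequence `β_m`: `β₁ = βε`,
`β_{m+1} = β_m + βε - (d/2) log(1 + 4εα_m)` (with `β₀ = 0`). -/
def betaSeq (d : ℕ) (α β ε : ℝ) : ℕ → ℝ
  | 0 => 0
  | m + 1 => betaSeq d α β ε m + β * ε
      - ((d : ℝ) / 2) * Real.log (1 + 4 * ε * alphaSeq α ε m)

/-! ### Auxiliary lemmas -/

open Real in
lemma gauss_step (a : ℝ) (ha : 0 ≤ a) (v : ℝ≥0) (hv : 0 < (v : ℝ)) (y : ℝ) :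
    ∫ z, Real.exp (-a * (y + z) ^ 2) ∂(gaussianReal 0 v)
      = Real.exp (-(a / (1 + 2 * a * v)) * y ^ 2 - 1 / 2 * Real.log (1 + 2 * a * v)) := by
  have hv0 : v ≠ 0 := by
    intro h; rw [h] at hv; simp at hv
  set t : ℝ := (v : ℝ) with ht
  have h1 : (0:ℝ) < 1 + 2 * a * t := by nlinarith
  set c : ℝ := a + 1 / (2 * t) with hc
  have hcpos : 0 < c := by rw [hc]; positivity
  have hc0 : c ≠ 0 := hcpos.ne'
  have ht0 : t ≠ 0 := hv.ne'
  have h10 : (1 + 2 * a * t) ≠ 0 := h1.ne'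
  rw [gaussianReal_of_var_ne_zero 0 hv0]
  have hpdf : (gaussianPDF 0 v) = fun z => ((Real.toNNReal (gaussianPDFReal 0 v z) : ℝ≥0) : ℝ≥0∞) := by
    funext z; rfl
  rw [hpdf, integral_withDensity_eq_integral_smul
    ((measurable_gaussianPDFReal 0 v).real_toNNReal) _]
  have hptw : ∀ z : ℝ, (Real.toNNReal (gaussianPDFReal 0 v z)) • Real.exp (-a * (y + z) ^ 2)
      = ((Real.sqrt (2 * π * t))⁻¹ * Real.exp (-(a / (1 + 2 * a * t)) * y ^ 2))
        * Real.exp (-c * (z + a * y / c) ^ 2) := by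
    intro z
    rw [NNReal.smul_def, Real.coe_toNNReal _ (gaussianPDFReal_nonneg 0 v z)]
    unfold gaussianPDFReal
    simp only [smul_eq_mul, mul_assoc, ← Real.exp_add]
    have h2 : 2 * (π * t) = 2 * π * t := by ring
    rw [h2]
    congr 1
    congr 1
    rw [hc]
    simp only [← ht]
    field_simp
    ring
  rw [MeasureTheory.integral_congr_ae (Filter.Eventually.of_forall hptw),
    MeasureTheory.integral_const_mul]
  rw [integral_add_right_eq_self (fun z => Real.exp (-c * z ^ 2)) (a * y / c)]
  rw [integral_gaussian c]
  have key : (Real.sqrt (2 * π * t))⁻¹ * Real.sqrt (π / c)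
      = Real.exp (-(1 / 2 * Real.log (1 + 2 * a * t))) := by
    have h2tc : 2 * t * c = 1 + 2 * a * t := by rw [hc]; field_simp; ring
    have hfrac : π / c / (2 * π * t) = (1 + 2 * a * t)⁻¹ := by
      rw [← h2tc]; field_simp
    have hsq : Real.sqrt (1 + 2 * a * t) = Real.exp (Real.log (1 + 2 * a * t) / 2) := by
      rw [← Real.exp_log (Real.sqrt_pos.mpr h1), Real.log_sqrt h1.le]
    rw [inv_mul_eq_div, ← Real.sqrt_div (by positivity : (0:ℝ) ≤ π / c), hfrac,
      Real.sqrt_inv, hsq, ← Real.exp_neg]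
    congr 1
    ring
  calc (Real.sqrt (2 * π * t))⁻¹ * Real.exp (-(a / (1 + 2 * a * t)) * y ^ 2) * Real.sqrt (π / c)
      = ((Real.sqrt (2 * π * t))⁻¹ * Real.sqrt (π / c)) * Real.exp (-(a / (1 + 2 * a * t)) * y ^ 2) := by ring
    _ = Real.exp (-(a / (1 + 2 * a * t)) * y ^ 2 - 1 / 2 * Real.log (1 + 2 * a * t)) := by
        rw [key, ← Real.exp_add]; congr 1; ring

lemma aemeasurable_pi_lambda' {Ω : Type*} [MeasurableSpace Ω] {μ : Measure Ω}
    {ι : Type*} [Countable ι] {β : ι → Type*} [mβ : ∀ i, MeasurableSpace (β i)]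
    {f : ∀ i, Ω → β i} (hf : ∀ i, AEMeasurable (f i) μ) :
    AEMeasurable (fun ω i => f i ω) μ := by
  refine ⟨fun ω i => (hf i).mk _ ω, measurable_pi_lambda _ fun i => (hf i).measurable_mk, ?_⟩
  have := ae_all_iff.2 fun i => (hf i).ae_eq_mk
  filter_upwards [this] with ω hω
  funext i; exact hω i

lemma map_pi_of_iIndepFun {Ω : Type*} [MeasurableSpace Ω] {μ : Measure Ω} [IsProbabilityMeasure μ]
    {ι : Type*} [Fintype ι] {β : ι → Type*} [mβ : ∀ i, MeasurableSpace (β i)]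
    {f : ∀ i, Ω → β i} (hf : ∀ i, AEMeasurable (f i) μ)
    (h : iIndepFun f μ) :
    Measure.map (fun ω i => f i ω) μ = Measure.pi (fun i => Measure.map (f i) μ) := by
  have hmap : ∀ i, IsProbabilityMeasure (Measure.map (f i) μ) :=
    fun i => Measure.isProbabilityMeasure_map (hf i)
  have hlam : AEMeasurable (fun ω i => f i ω) μ := aemeasurable_pi_lambda' hf
  refine (Measure.pi_eq (μ := fun i => Measure.map (f i) μ) fun s hs => ?_).symm
  rw [Measure.map_apply_of_aemeasurable hlam (MeasurableSet.univ_pi hs)]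
  have hpre : (fun ω i => f i ω) ⁻¹' (Set.univ.pi s) = ⋂ i, f i ⁻¹' s i := by
    ext ω; simp [Set.mem_pi]
  rw [hpre, h.meas_iInter fun i => ⟨s i, hs i, rfl⟩]
  exact Finset.prod_congr rfl fun i _ =>
    (Measure.map_apply_of_aemeasurable (hf i) (hs i)).symm

lemma alphaSeq_nonneg (α ε : ℝ) (hα : 0 < α) (hε : 0 < ε) : ∀ m, 0 ≤ alphaSeq α ε m
  | 0 => le_refl 0
  | m + 1 => by
      have h := alphaSeq_nonneg α ε hα hε m
      have h1 : (0:ℝ) < 1 + 4 * ε * alphaSeq α ε m := by nlinarith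
      have : 0 ≤ alphaSeq α ε m / (1 + 4 * ε * alphaSeq α ε m) := div_nonneg h h1.le
      show 0 ≤ α * ε + alphaSeq α ε m / (1 + 4 * ε * alphaSeq α ε m)
      nlinarith

lemma betaSeq_split (d : ℕ) (α β ε : ℝ) : ∀ m : ℕ,
    betaSeq d α β ε m = β * ε * m + d * betaSeq 1 α 0 ε m
  | 0 => by simp [betaSeq]
  | m + 1 => by
      have IH := betaSeq_split d α β ε m
      show betaSeq d α β ε m + β * ε - ((d : ℝ) / 2) * Real.log (1 + 4 * ε * alphaSeq α ε m)
        = β * ε * ((m : ℕ) + 1 : ℕ) + d * (betaSeq 1 α 0 ε m + 0 * ε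
            - (((1 : ℕ) : ℝ) / 2) * Real.log (1 + 4 * ε * alphaSeq α ε m))
      rw [IH]
      push_cast
      ring

def zext {m : ℕ} (z : Fin m → ℝ) (j : ℕ) : ℝ := if h : j < m then z ⟨j, h⟩ else 0

def pSum {m : ℕ} (z : Fin m → ℝ) (k : ℕ) : ℝ := ∑ j ∈ Finset.range k, zext z j

lemma pSum_zero {m : ℕ} (z : Fin m → ℝ) : pSum z 0 = 0 := by simp [pSum]

lemma zext_cons_succ {m : ℕ} (z0 : ℝ) (zs : Fin m → ℝ) (j : ℕ) :
    zext (Fin.cons z0 zs : Fin (m+1) → ℝ) (j+1) = zext zs j := by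
  unfold zext
  by_cases h : j < m
  · rw [dif_pos (Nat.succ_lt_succ h), dif_pos h]
    have e : (⟨j+1, Nat.succ_lt_succ h⟩ : Fin (m+1)) = (⟨j, h⟩ : Fin m).succ := rfl
    rw [e, Fin.cons_succ]
  · rw [dif_neg (fun hh => h (Nat.lt_of_succ_lt_succ hh)), dif_neg h]

lemma zext_cons_zero {m : ℕ} (z0 : ℝ) (zs : Fin m → ℝ) :
    zext (Fin.cons z0 zs : Fin (m+1) → ℝ) 0 = z0 := by
  unfold zext
  rw [dif_pos (Nat.succ_pos m)]
  have e : (⟨0, Nat.succ_pos m⟩ : Fin (m+1)) = 0 := rfl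
  rw [e, Fin.cons_zero]

lemma pSum_cons {m : ℕ} (z0 : ℝ) (zs : Fin m → ℝ) (k : ℕ) :
    pSum (Fin.cons z0 zs : Fin (m+1) → ℝ) (k+1) = z0 + pSum zs k := by
  unfold pSum
  rw [Finset.sum_range_succ']
  simp only [zext_cons_succ, zext_cons_zero]
  ring

lemma continuous_pSum {m : ℕ} (k : ℕ) : Continuous fun z : Fin m → ℝ => pSum z k := by
  unfold pSum
  refine continuous_finset_sum _ fun j _ => ?_
  unfold zext
  split
  · exact continuous_apply _
  · exact continuous_const

lemma integrable_exp_nonpos {X : Type*} [MeasurableSpace X] [TopologicalSpace X]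
    [OpensMeasurableSpace X] (μ : Measure X) [IsProbabilityMeasure μ] {f : X → ℝ}
    (hf : Continuous f) (h0 : ∀ x, f x ≤ 0) :
    Integrable (fun x => Real.exp (f x)) μ := by
  refine Integrable.mono' (integrable_const 1) (hf.rexp.aestronglyMeasurable)
    (ae_of_all _ fun x => ?_)
  rw [Real.norm_eq_abs, abs_of_pos (Real.exp_pos _)]
  exact Real.exp_le_one_iff.2 (h0 x)

lemma oneDim (α ε : ℝ) (hα : 0 < α) (hε : 0 < ε) : ∀ (m : ℕ) (y : ℝ),
    ∫ z : Fin m → ℝ, Real.exp (-(ε * α) * ∑ k ∈ Finset.range m, (y + pSum z k) ^ 2)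
        ∂(Measure.pi fun _ : Fin m => gaussianReal 0 (Real.toNNReal (2 * ε)))
      = Real.exp (-(alphaSeq α ε m) * y ^ 2 + betaSeq 1 α 0 ε m) := by
  intro m
  induction m with
  | zero =>
      intro y
      simp [alphaSeq, betaSeq]
  | succ m IH =>
      intro y
      set v : ℝ≥0 := Real.toNNReal (2 * ε) with hvdef
      have hvr : (v : ℝ) = 2 * ε := Real.coe_toNNReal _ (by positivity)
      have hvpos : 0 < (v : ℝ) := by rw [hvr]; positivity
      have hca : 0 ≤ alphaSeq α ε m := alphaSeq_nonneg α ε hα hε m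
      have h1 : (0:ℝ) < 1 + 4 * ε * alphaSeq α ε m := by nlinarith
      have mp := (measurePreserving_piFinSuccAbove
        (fun _ : Fin (m+1) => gaussianReal 0 v) 0).symm
      rw [← mp.integral_comp']
      simp only [MeasurableEquiv.piFinSuccAbove_symm_apply, Fin.insertNthEquiv,
        Equiv.coe_fn_mk, Fin.insertNth_zero, cast_eq]
      have hsum : ∀ (z0 : ℝ) (zs : Fin m → ℝ),
          ∑ k ∈ Finset.range (m+1), (y + pSum (Fin.cons z0 zs : Fin (m+1) → ℝ) k) ^ 2
            = y ^ 2 + ∑ k ∈ Finset.range m, (y + z0 + pSum zs k) ^ 2 := by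
        intro z0 zs
        rw [Finset.sum_range_succ']
        simp only [pSum_cons, pSum_zero, add_zero, ← add_assoc]
        ring
      simp only [hsum, mul_add, Real.exp_add]
      set a : ℝ := alphaSeq α ε m with hadef
      have hint : Integrable (fun p : ℝ × (Fin m → ℝ) =>
          Real.exp (-(ε * α) * ∑ k ∈ Finset.range m, (y + p.1 + pSum p.2 k) ^ 2))
          ((gaussianReal 0 v).prod (Measure.pi fun _ : Fin m => gaussianReal 0 v)) := by
        refine integrable_exp_nonpos _ ?_ ?_
        · exact continuous_const.mul (continuous_finset_sum _ fun k _ =>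
            ((continuous_const.add continuous_fst).add
              ((continuous_pSum k).comp continuous_snd)).pow 2)
        · intro p
          have hS : 0 ≤ ∑ k ∈ Finset.range m, (y + p.1 + pSum p.2 k) ^ 2 :=
            Finset.sum_nonneg fun k _ => sq_nonneg _
          have hεα : 0 ≤ ε * α := by positivity
          nlinarith
      rw [MeasureTheory.integral_const_mul, MeasureTheory.integral_prod _ hint]
      simp only [IH]
      simp only [Real.exp_add]
      rw [MeasureTheory.integral_mul_const]
      rw [gauss_step a hca v hvpos y]
      rw [← Real.exp_add, ← Real.exp_add, ← Real.exp_add]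
      congr 1
      have h2v : 1 + 2 * a * (v : ℝ) = 1 + 4 * ε * a := by rw [hvr]; ring
      rw [h2v]
      have hα1 : alphaSeq α ε (m+1) = α * ε + a / (1 + 4 * ε * a) := rfl
      have hβ1 : betaSeq 1 α 0 ε (m+1)
          = betaSeq 1 α 0 ε m + 0 * ε - ((1:ℕ) : ℝ) / 2 * Real.log (1 + 4 * ε * a) := rfl
      rw [hα1, hβ1]
      push_cast
      ring

/-- the Gaussian identity
`E[e^{-ε Σ_{k=0}^{m-1} (α|B^x_{2kε}|² - β)}] = e^{-α_m |x|² + β_m}` for `1 ≤ m ≤ n`. -/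
theorem gaussian_expectation_recursion
    [MeasurableSpace Ω] (μ : Measure Ω) [IsProbabilityMeasure μ]
    (B : ℝ → Ω → EuclideanSpace ℝ (Fin d)) (hB : IsBM μ B)
    (x : EuclideanSpace ℝ (Fin d)) (α β ε : ℝ)
    (hα : 0 < α) (hβ : 0 < β) (hε : 0 < ε) (n : ℕ) :
    ∀ m : ℕ, 1 ≤ m → m ≤ n →
      ∫ ω, Real.exp (-(ε * ∑ k ∈ Finset.range m,
          (α * ‖x + B (2 * (k : ℝ) * ε) ω‖ ^ 2 - β))) ∂μ
        = Real.exp (-(alphaSeq α ε m) * ‖x‖ ^ 2 + betaSeq d α β ε m) := by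
  intro m _hm1 _hmn
  classical
  set v : ℝ≥0 := Real.toNNReal (2 * ε) with hvdef
  -- increments are a.e. measurable
  have hXae : ∀ (i : Fin d) (s t : ℝ), 0 ≤ s → s ≤ t →
      AEMeasurable (fun ω => B t ω i - B s ω i) μ := by
    intro i s t hs hst
    by_contra h
    have h0 := Measure.map_of_not_aemeasurable (μ := μ) h
    have h1 := (hB.1 i).2.2.1 s t hs hst
    rw [h0] at h1
    exact (IsProbabilityMeasure.ne_zero (gaussianReal 0 (Real.toNNReal (t - s)))) h1.symm
  have hts_mono : Monotone (fun j : ℕ => 2 * (j : ℝ) * ε) := by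
    intro a b hab
    have : (a : ℝ) ≤ b := Nat.cast_le.2 hab
    dsimp only
    nlinarith
  have hts_nonneg : ∀ j : ℕ, 0 ≤ 2 * (j : ℝ) * ε := fun j => by positivity
  -- the increments
  set V : Fin d → Ω → Fin m → ℝ := fun i ω k =>
    B (2 * (((k : ℕ) + 1 : ℕ) : ℝ) * ε) ω i - B (2 * ((k : ℕ) : ℝ) * ε) ω i with hVdef
  have hVae : ∀ i, AEMeasurable (V i) μ := by
    intro i
    exact aemeasurable_pi_lambda' fun k =>
      hXae i _ _ (hts_nonneg (k : ℕ)) (hts_mono (Nat.le_succ (k : ℕ)))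
  -- law of each coordinate increment vector
  have hVlaw : ∀ i, Measure.map (V i) μ
      = Measure.pi (fun _ : Fin m => gaussianReal 0 v) := by
    intro i
    have hind := (hB.1 i).2.2.2 m (fun j : ℕ => 2 * (j : ℝ) * ε) hts_mono hts_nonneg
    have h := map_pi_of_iIndepFun (μ := μ)
      (f := fun (k : Fin m) (ω : Ω) => V i ω k)
      (fun k => hXae i _ _ (hts_nonneg (k : ℕ)) (hts_mono (Nat.le_succ (k : ℕ)))) hind
    rw [show (fun (ω : Ω) (k : Fin m) => V i ω k) = V i from rfl] at h
    rw [h]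
    refine congrArg Measure.pi (funext fun k => ?_)
    have hmarg := (hB.1 i).2.2.1 (2 * ((k : ℕ) : ℝ) * ε) (2 * (((k : ℕ) + 1 : ℕ) : ℝ) * ε)
      (hts_nonneg (k : ℕ)) (hts_mono (Nat.le_succ (k : ℕ)))
    rw [hmarg]
    congr 1
    rw [hvdef]
    congr 1
    push_cast
    ring
  -- joint independence of the coordinate increment vectors
  have hVindep : iIndepFun V μ := by
    have hg : ∀ i : Fin d, Measurable (fun w : ℝ → ℝ => fun k : Fin m =>
        w (2 * (((k : ℕ) + 1 : ℕ) : ℝ) * ε) - w (2 * ((k : ℕ) : ℝ) * ε)) := fun i =>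
      measurable_pi_lambda _ fun k => (measurable_pi_apply _).sub (measurable_pi_apply _)
    have := hB.2.comp _ hg
    exact this
  -- law of the matrix of increments
  have hΦae : AEMeasurable (fun ω (i : Fin d) => V i ω) μ := aemeasurable_pi_lambda' hVae
  have hΦlaw : Measure.map (fun ω (i : Fin d) => V i ω) μ
      = Measure.pi (fun _ : Fin d => Measure.pi (fun _ : Fin m => gaussianReal 0 v)) := by
    rw [map_pi_of_iIndepFun hVae hVindep]
    exact congrArg Measure.pi (funext fun i => hVlaw i)
  -- the function on matrix space
  set F : (Fin d → Fin m → ℝ) → ℝ := fun z =>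
    Real.exp (-(ε * ∑ k ∈ Finset.range m,
      (α * ∑ i, (x i + pSum (z i) k) ^ 2 - β))) with hFdef
  have hFcont : Continuous F := by
    have h1 : ∀ k : ℕ, Continuous fun z : Fin d → Fin m → ℝ =>
        ∑ i, (x i + pSum (z i) k) ^ 2 := fun k =>
      continuous_finset_sum _ fun i _ =>
        ((continuous_const.add ((continuous_pSum k).comp (continuous_apply i))).pow 2)
    exact Real.continuous_exp.comp ((continuous_const.mul (continuous_finset_sum _ fun k _ =>
      ((continuous_const.mul (h1 k)).sub continuous_const))).neg)
  -- the norm identity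
  have hnorm : ∀ w : EuclideanSpace ℝ (Fin d), ‖w‖ ^ 2 = ∑ i, (w i) ^ 2 := by
    intro w
    have h := EuclideanSpace.norm_eq w
    rw [h, Real.sq_sqrt (Finset.sum_nonneg fun i _ => sq_nonneg _)]
    exact Finset.sum_congr rfl fun i _ => by rw [Real.norm_eq_abs, sq_abs]
  -- a.e. rewriting of the integrand
  have hae0 : ∀ᵐ ω ∂μ, ∀ i : Fin d, B 0 ω i = 0 := ae_all_iff.2 fun i => (hB.1 i).1
  have haecongr : ∀ᵐ ω ∂μ, Real.exp (-(ε * ∑ k ∈ Finset.range m,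
      (α * ‖x + B (2 * (k : ℝ) * ε) ω‖ ^ 2 - β))) = F (fun i => V i ω) := by
    filter_upwards [hae0] with ω hω
    have hBk : ∀ (i : Fin d) (k : ℕ), k ≤ m → pSum (V i ω) k = B (2 * (k : ℝ) * ε) ω i := by
      intro i k hkm
      unfold pSum
      have hterm : ∀ j ∈ Finset.range k, zext (V i ω) j
          = B (2 * ((j + 1 : ℕ) : ℝ) * ε) ω i - B (2 * ((j : ℕ) : ℝ) * ε) ω i := by
        intro j hj
        have hj' : j < m := lt_of_lt_of_le (Finset.mem_range.1 hj) hkm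
        rw [zext, dif_pos hj']
      rw [Finset.sum_congr rfl hterm,
        Finset.sum_range_sub (fun j : ℕ => B (2 * (j : ℝ) * ε) ω i) k]
      have h0 : 2 * ((0 : ℕ) : ℝ) * ε = 0 := by norm_num
      rw [h0, hω i, sub_zero]
    simp only [hFdef]
    congr 1
    congr 1
    congr 1
    refine Finset.sum_congr rfl fun k hk => ?_
    congr 1
    congr 1
    rw [hnorm]
    refine Finset.sum_congr rfl fun i _ => ?_
    have : (x + B (2 * (k : ℝ) * ε) ω) i = x i + B (2 * (k : ℝ) * ε) ω i := rfl
    rw [this, hBk i k (le_of_lt (Finset.mem_range.1 hk))]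
  rw [MeasureTheory.integral_congr_ae haecongr]
  have hmint : ∫ ω, F (fun i => V i ω) ∂μ
      = ∫ z, F z ∂(Measure.pi (fun _ : Fin d => Measure.pi (fun _ : Fin m => gaussianReal 0 v))) := by
    rw [← hΦlaw]
    exact (integral_map hΦae hFcont.aestronglyMeasurable).symm
  rw [hmint]
  -- factorize
  have hFfac : ∀ z : Fin d → Fin m → ℝ, F z = Real.exp (ε * β * m)
      * ∏ i, Real.exp (-(ε * α) * ∑ k ∈ Finset.range m, (x i + pSum (z i) k) ^ 2) := by
    intro z
    simp only [hFdef]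
    rw [← Real.exp_sum, ← Real.exp_add]
    congr 1
    have h1 : ∑ k ∈ Finset.range m, (α * ∑ i, (x i + pSum (z i) k) ^ 2 - β)
        = α * (∑ i, ∑ k ∈ Finset.range m, (x i + pSum (z i) k) ^ 2) - m * β := by
      rw [Finset.sum_sub_distrib, Finset.sum_const, Finset.card_range, nsmul_eq_mul,
        ← Finset.mul_sum, Finset.sum_comm]
    rw [h1, ← Finset.mul_sum]
    ring
  simp only [hFfac]
  rw [MeasureTheory.integral_const_mul]
  have hprodint : ∫ z : Fin d → Fin m → ℝ,
      ∏ i, Real.exp (-(ε * α) * ∑ k ∈ Finset.range m, (x i + pSum (z i) k) ^ 2)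
        ∂(Measure.pi (fun _ : Fin d => Measure.pi (fun _ : Fin m => gaussianReal 0 v)))
      = ∏ i, ∫ w : Fin m → ℝ,
          Real.exp (-(ε * α) * ∑ k ∈ Finset.range m, (x i + pSum w k) ^ 2)
            ∂(Measure.pi (fun _ : Fin m => gaussianReal 0 v)) := by
    letI : MeasureSpace ℝ := ⟨gaussianReal 0 v⟩
    haveI hsf : SigmaFinite (volume : Measure (Fin m → ℝ)) := by
      show SigmaFinite (Measure.pi fun _ : Fin m => gaussianReal 0 v)
      infer_instance
    haveI : ∀ _i : Fin d, SigmaFinite (volume : Measure (Fin m → ℝ)) := fun _ => hsf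
    exact MeasureTheory.integral_fintype_prod_eq_prod
      (fun i w => Real.exp (-(ε * α) * ∑ k ∈ Finset.range m, (x i + pSum w k) ^ 2))
  rw [hprodint]
  have hone : ∀ i : Fin d, ∫ w : Fin m → ℝ,
      Real.exp (-(ε * α) * ∑ k ∈ Finset.range m, (x i + pSum w k) ^ 2)
        ∂(Measure.pi (fun _ : Fin m => gaussianReal 0 v))
      = Real.exp (-(alphaSeq α ε m) * (x i) ^ 2 + betaSeq 1 α 0 ε m) :=
    fun i => oneDim α ε hα hε m (x i)
  simp only [hone]
  rw [← Real.exp_sum, ← Real.exp_add]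
  rw [hnorm x, betaSeq_split d α β ε m]
  rw [Finset.sum_add_distrib, Finset.sum_const, nsmul_eq_mul, ← Finset.mul_sum]
  simp only [Finset.card_univ, Fintype.card_fin]
  ring

end
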